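/- Let k ≥ 1 and n be natural numbers, let c : ℕ → ℝ be nonnegative, and let g : ℕ × ℕ → ℝ be nonnegative and satisfy: g(ℓ, 0) = 0 for all ℓ; g(n+1, r) = 0 for all r; and g(ℓ, r) ≥ (1/ℓ)·( c(ℓ) + (k−1)·g(ℓ+1, r−1) + (ℓ−k)·g(ℓ+1, r) ) for all ℓ with k < ℓ ≤ n and all r ≥ 1. Then for all ℓ with k < ℓ ≤ n and all r, g(ℓ, r) ≥ ∑_{j=ℓ}^{n} (a(ℓ, j−1)/j) · c(j) · ∑_{r'=0}^{r−1} ∑_{M ⊆ {ℓ, …, j−1}, |M| = r'} ∏_{i ∈ M} (k−1)/i, where a(ℓ, j−1) = ∏_{i=ℓ}^{j−1} (1 − k/i) (empty product equal to 1), the middle sum ranges over all subsets M of the integer interval {ℓ, …, j−1} of cardinality r', and all arithmetic is over the real numbers. -/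

import Mathlib

open Finset

/-- elementary-symmetric type sum over subsets of size `r'`. -/
noncomputable def auxE (f : ℕ → ℝ) (s : Finset ℕ) (r' : ℕ) : ℝ :=
  ∑ M ∈ s.powersetCard r', ∏ i ∈ M, f i

lemma auxE_insert (f : ℕ → ℝ) {x : ℕ} {s : Finset ℕ} (hx : x ∉ s) (r' : ℕ) :
    auxE f (insert x s) (r' + 1) = auxE f s (r' + 1) + f x * auxE f s r' := by
  unfold auxE
  rw [Finset.powersetCard_succ_insert hx, Finset.sum_union, Finset.sum_image]
  · rw [Finset.mul_sum]
    congr 1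
    refine Finset.sum_congr rfl fun M hM => ?_
    have hxM : x ∉ M := fun h => hx ((Finset.mem_powersetCard.mp hM).1 h)
    rw [Finset.prod_insert hxM]
  · intro M₁ h₁ M₂ h₂ h
    have hx1 : x ∉ M₁ := fun h' => hx ((Finset.mem_powersetCard.mp h₁).1 h')
    have hx2 : x ∉ M₂ := fun h' => hx ((Finset.mem_powersetCard.mp h₂).1 h')
    rw [← Finset.erase_insert hx1, ← Finset.erase_insert hx2, h]
  · rw [Finset.disjoint_right]
    intro M hM hM'
    simp only [Finset.mem_image] at hM
    obtain ⟨M', _, rfl⟩ := hM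
    exact hx ((Finset.mem_powersetCard.mp hM').1 (Finset.mem_insert_self x M'))

lemma auxE_zero (f : ℕ → ℝ) (s : Finset ℕ) : auxE f s 0 = 1 := by
  simp [auxE]

lemma auxE_nonneg {f : ℕ → ℝ} (hf : ∀ i, 0 ≤ f i) (s : Finset ℕ) (r' : ℕ) :
    0 ≤ auxE f s r' :=
  Finset.sum_nonneg fun M _ => Finset.prod_nonneg fun i _ => hf i

/-- the `T` quantity. -/
noncomputable def auxT (k ℓ j r : ℕ) : ℝ :=
  ∑ r' ∈ Finset.range r, auxE (fun i => ((k : ℝ) - 1) / i) (Finset.Ico ℓ j) r'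

lemma auxf_nonneg {k : ℕ} (hk : 1 ≤ k) (i : ℕ) : 0 ≤ ((k : ℝ) - 1) / i := by
  apply div_nonneg _ (Nat.cast_nonneg i)
  have : (1 : ℝ) ≤ (k : ℝ) := by exact_mod_cast hk
  linarith

lemma auxT_nonneg {k : ℕ} (hk : 1 ≤ k) (ℓ j r : ℕ) : 0 ≤ auxT k ℓ j r :=
  Finset.sum_nonneg fun r' _ => auxE_nonneg (auxf_nonneg hk) _ r'

lemma auxT_zero (k ℓ j : ℕ) : auxT k ℓ j 0 = 0 := by simp [auxT]

lemma auxT_self (k ℓ : ℕ) {r : ℕ} (hr : 1 ≤ r) : auxT k ℓ ℓ r = 1 := by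
  obtain ⟨t, rfl⟩ := Nat.exists_eq_add_of_le hr
  unfold auxT
  rw [add_comm, Finset.sum_range_succ']
  have h1 : ∀ r' ∈ Finset.range t,
      auxE (fun i => ((k : ℝ) - 1) / i) (Finset.Ico ℓ ℓ) (r' + 1) = 0 := by
    intro r' _
    unfold auxE
    rw [Finset.Ico_self]
    rw [Finset.powersetCard_eq_empty.mpr (by simp)]
    simp
  rw [Finset.sum_congr rfl h1, auxE_zero]
  simp

lemma auxT_succ (k : ℕ) {ℓ j : ℕ} (h : ℓ < j) (r : ℕ) :
    auxT k ℓ j (r + 1) =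
      auxT k (ℓ + 1) j (r + 1) + ((k : ℝ) - 1) / ℓ * auxT k (ℓ + 1) j r := by
  have hins : insert ℓ (Finset.Ico (ℓ + 1) j) = Finset.Ico ℓ j :=
    Finset.insert_Ico_add_one_left_eq_Ico h
  have hx : ℓ ∉ Finset.Ico (ℓ + 1) j := by simp
  unfold auxT
  rw [Finset.sum_range_succ', Finset.sum_range_succ']
  have key : ∀ r', auxE (fun i => ((k : ℝ) - 1) / i) (Finset.Ico ℓ j) (r' + 1)
      = auxE (fun i => ((k : ℝ) - 1) / i) (Finset.Ico (ℓ + 1) j) (r' + 1)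
        + ((k : ℝ) - 1) / ℓ * auxE (fun i => ((k : ℝ) - 1) / i) (Finset.Ico (ℓ + 1) j) r' := by
    intro r'
    rw [← hins, auxE_insert _ hx]
  rw [Finset.sum_congr rfl fun r' _ => key r', Finset.sum_add_distrib, ← Finset.mul_sum,
    auxE_zero, auxE_zero]
  ring

/-- the `S` quantity. -/
noncomputable def auxS (k n : ℕ) (c : ℕ → ℝ) (ℓ r : ℕ) : ℝ :=
  ∑ j ∈ Finset.Icc ℓ n,
    (∏ i ∈ Finset.Ico ℓ j, (1 - (k : ℝ) / i)) / j * c j * auxT k ℓ j r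

lemma auxa_nonneg {k ℓ j : ℕ} (hkℓ : k < ℓ) :
    0 ≤ ∏ i ∈ Finset.Ico ℓ j, (1 - (k : ℝ) / i) := by
  apply Finset.prod_nonneg
  intro i hi
  have hi' : ℓ ≤ i := (Finset.mem_Ico.mp hi).1
  have h0 : (0 : ℝ) < i := by
    have : 0 < i := lt_of_le_of_lt (Nat.zero_le k) (lt_of_lt_of_le hkℓ hi')
    exact_mod_cast this
  have : (k : ℝ) ≤ i := by exact_mod_cast le_of_lt (lt_of_lt_of_le hkℓ hi')
  have := div_le_one_of_le₀ this (le_of_lt h0)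
  linarith

lemma auxa_succ {k ℓ j : ℕ} (h : ℓ < j) :
    (∏ i ∈ Finset.Ico ℓ j, (1 - (k : ℝ) / i)) =
      (1 - (k : ℝ) / ℓ) * ∏ i ∈ Finset.Ico (ℓ + 1) j, (1 - (k : ℝ) / i) :=
  Finset.prod_eq_prod_Ico_succ_bot h _

lemma auxS_zero (k n : ℕ) (c : ℕ → ℝ) (ℓ : ℕ) : auxS k n c ℓ 0 = 0 := by
  simp [auxS, auxT_zero]

lemma auxS_top (k n : ℕ) (c : ℕ → ℝ) (r : ℕ) : auxS k n c (n + 1) r = 0 := by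
  unfold auxS
  rw [Finset.Icc_eq_empty (by omega)]
  simp

/-- key step inequality. -/
lemma auxS_step {k n ℓ : ℕ} (hk : 1 ≤ k) (hkℓ : k < ℓ) (hℓn : ℓ ≤ n)
    {c : ℕ → ℝ} (hc : ∀ j, 0 ≤ c j) (t : ℕ) :
    auxS k n c ℓ (t + 1) ≤ 1 / (ℓ : ℝ) *
      (c ℓ + ((k : ℝ) - 1) * auxS k n c (ℓ + 1) t
        + ((ℓ : ℝ) - k) * auxS k n c (ℓ + 1) (t + 1)) := by
  have hℓ0 : (0 : ℝ) < ℓ := by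
    have : 0 < ℓ := lt_of_le_of_lt (Nat.zero_le k) hkℓ
    exact_mod_cast this
  have hkr : (1 : ℝ) ≤ (k : ℝ) := by exact_mod_cast hk
  have hkℓr : (k : ℝ) < ℓ := by exact_mod_cast hkℓ
  have hins : Finset.Icc ℓ n = insert ℓ (Finset.Icc (ℓ + 1) n) := by
    rw [Finset.Icc_add_one_left_eq_Ioc, Finset.Ioc_insert_left hℓn]
  have hx : ℓ ∉ Finset.Icc (ℓ + 1) n := by simp
  unfold auxS
  rw [hins, Finset.sum_insert hx]
  have hterm : (∏ i ∈ Finset.Ico ℓ ℓ, (1 - (k : ℝ) / i)) / ℓ * c ℓ * auxT k ℓ ℓ (t + 1)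
      = 1 / (ℓ : ℝ) * c ℓ := by
    rw [Finset.Ico_self, Finset.prod_empty, auxT_self k ℓ (Nat.le_add_left 1 t)]
    ring
  rw [hterm]
  rw [mul_add, mul_add, Finset.mul_sum, Finset.mul_sum, Finset.mul_sum, Finset.mul_sum,
    add_assoc, ← Finset.sum_add_distrib]
  apply add_le_add_right
  apply Finset.sum_le_sum
  intro j hj
  have hℓj : ℓ < j := by
    have := (Finset.mem_Icc.mp hj).1; omega
  rw [auxa_succ hℓj, auxT_succ k hℓj t]
  set A : ℝ := (∏ i ∈ Finset.Ico (ℓ + 1) j, (1 - (k : ℝ) / i)) / j * c j with hA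
  have hAnn : 0 ≤ A := by
    apply mul_nonneg _ (hc j)
    apply div_nonneg (auxa_nonneg (by omega)) (Nat.cast_nonneg j)
  set T0 : ℝ := auxT k (ℓ + 1) j t with hT0
  set T1 : ℝ := auxT k (ℓ + 1) j (t + 1) with hT1
  have hT0nn : 0 ≤ T0 := auxT_nonneg hk _ _ _
  have hT1nn : 0 ≤ T1 := auxT_nonneg hk _ _ _
  have hgoal : (1 - (k : ℝ) / ℓ) * (∏ i ∈ Finset.Ico (ℓ + 1) j, (1 - (k : ℝ) / i)) / j * c j
      * (T1 + ((k : ℝ) - 1) / ℓ * T0)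
      = (1 - (k : ℝ) / ℓ) * (A * T1) + (1 - (k : ℝ) / ℓ) * (((k : ℝ) - 1) / ℓ) * (A * T0) := by
    rw [hA]; ring
  rw [hgoal]
  have h1 : (1 - (k : ℝ) / ℓ) = ((ℓ : ℝ) - k) / ℓ := by
    field_simp
  have hle1 : (1 - (k : ℝ) / ℓ) ≤ 1 := by
    have : 0 < (k : ℝ) / ℓ := div_pos (by linarith) hℓ0
    linarith
  have hnn1 : 0 ≤ (1 - (k : ℝ) / ℓ) := by
    rw [h1]; apply div_nonneg (by linarith) (le_of_lt hℓ0)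
  have h2 : 1 / (ℓ : ℝ) * (((k : ℝ) - 1) * ((∏ i ∈ Finset.Ico (ℓ + 1) j, (1 - (k : ℝ) / i)) / j
        * c j * T0))
      = (((k : ℝ) - 1) / ℓ) * (A * T0) := by
    rw [hA]; ring
  have h3 : 1 / (ℓ : ℝ) * (((ℓ : ℝ) - k) * ((∏ i ∈ Finset.Ico (ℓ + 1) j, (1 - (k : ℝ) / i)) / j
        * c j * T1))
      = (1 - (k : ℝ) / ℓ) * (A * T1) := by
    rw [hA, h1]; ring
  rw [h2, h3, add_comm ((((k : ℝ) - 1) / ℓ) * (A * T0))]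
  apply add_le_add_right
  have hf : 0 ≤ (((k : ℝ) - 1) / ℓ) * (A * T0) :=
    mul_nonneg (div_nonneg (by linarith) (le_of_lt hℓ0)) (mul_nonneg hAnn hT0nn)
  calc (1 - (k : ℝ) / ℓ) * (((k : ℝ) - 1) / ℓ) * (A * T0)
      = (1 - (k : ℝ) / ℓ) * ((((k : ℝ) - 1) / ℓ) * (A * T0)) := by ring
    _ ≤ 1 * ((((k : ℝ) - 1) / ℓ) * (A * T0)) := mul_le_mul_of_nonneg_right hle1 hf
    _ = (((k : ℝ) - 1) / ℓ) * (A * T0) := one_mul _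

/-- Claim 1 of the paper: unfolding the recursion of Lemma 2. -/
theorem recursion_unfolding (k n : ℕ) (hk : 1 ≤ k) (c : ℕ → ℝ)
    (hc : ∀ j, 0 ≤ c j) (g : ℕ → ℕ → ℝ) (hg : ∀ ℓ r, 0 ≤ g ℓ r)
    (hg0 : ∀ ℓ, g ℓ 0 = 0) (hgn : ∀ r, g (n + 1) r = 0)
    (hrec : ∀ ℓ r, k < ℓ → ℓ ≤ n → 1 ≤ r →
      g ℓ r ≥ 1 / (ℓ : ℝ) *
        (c ℓ + ((k : ℝ) - 1) * g (ℓ + 1) (r - 1) + ((ℓ : ℝ) - k) * g (ℓ + 1) r)) :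
    ∀ ℓ r, k < ℓ → ℓ ≤ n →
      g ℓ r ≥ ∑ j ∈ Finset.Icc ℓ n,
        (∏ i ∈ Finset.Ico ℓ j, (1 - (k : ℝ) / i)) / j * c j *
          ∑ r' ∈ Finset.range r,
            ∑ M ∈ (Finset.Ico ℓ j).powersetCard r',
              ∏ i ∈ M, ((k : ℝ) - 1) / i := by
  have main : ∀ m ℓ, n + 1 ≤ ℓ + m → k < ℓ → ℓ ≤ n + 1 → ∀ r,
      auxS k n c ℓ r ≤ g ℓ r := by
    intro m
    induction m with
    | zero =>
      intro ℓ h1 _ h3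
      have : ℓ = n + 1 := by omega
      subst this
      intro r
      rw [auxS_top, hgn]
    | succ m ih =>
      intro ℓ h1 hkℓ h3 r
      by_cases hcase : ℓ = n + 1
      · subst hcase; rw [auxS_top, hgn]
      · have hℓn : ℓ ≤ n := by omega
        cases r with
        | zero => rw [auxS_zero, hg0]
        | succ t =>
          have ih1 : auxS k n c (ℓ + 1) t ≤ g (ℓ + 1) t :=
            ih (ℓ + 1) (by omega) (by omega) (by omega) t
          have ih2 : auxS k n c (ℓ + 1) (t + 1) ≤ g (ℓ + 1) (t + 1) :=
            ih (ℓ + 1) (by omega) (by omega) (by omega) (t + 1)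
          have hr := hrec ℓ (t + 1) hkℓ hℓn (Nat.le_add_left 1 t)
          simp only [Nat.add_sub_cancel] at hr
          have hℓ0 : (0 : ℝ) ≤ 1 / (ℓ : ℝ) := by positivity
          have hk1 : (0 : ℝ) ≤ (k : ℝ) - 1 := by
            have : (1 : ℝ) ≤ (k : ℝ) := by exact_mod_cast hk
            linarith
          have hℓk : (0 : ℝ) ≤ (ℓ : ℝ) - k := by
            have : (k : ℝ) ≤ (ℓ : ℝ) := by exact_mod_cast le_of_lt hkℓ
            linarith
          calc auxS k n c ℓ (t + 1)
              ≤ 1 / (ℓ : ℝ) * (c ℓ + ((k : ℝ) - 1) * auxS k n c (ℓ + 1) t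
                + ((ℓ : ℝ) - k) * auxS k n c (ℓ + 1) (t + 1)) :=
                auxS_step hk hkℓ hℓn hc t
            _ ≤ 1 / (ℓ : ℝ) * (c ℓ + ((k : ℝ) - 1) * g (ℓ + 1) t
                + ((ℓ : ℝ) - k) * g (ℓ + 1) (t + 1)) := by
                apply mul_le_mul_of_nonneg_left _ hℓ0
                apply add_le_add
                apply add_le_add_right
                exact mul_le_mul_of_nonneg_left ih1 hk1
                exact mul_le_mul_of_nonneg_left ih2 hℓk
            _ ≤ g ℓ (t + 1) := hr
  intro ℓ r hkℓ hℓn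
  exact main (n + 1 - ℓ) ℓ (by omega) hkℓ (by omega) r
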